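/- Assume the regular domain 0 < α_0 < |α_τ|, where |α_τ| := min_{0<μ<N} |α_μ|, and set α_(c) := (Σ_{μ=1}^{N−1} |α_μ|^{−1})^{−1}. Then α_(c) < |α_τ|, and the LEC of the polygon is collinear (i.e. every global minimizer has all ψ_μ ∈ {0, π}) if and only if 0 < α_0 ≤ α_(c). -/

import Mathlib

open Real Finset

/-- The energy of an `N`-spin polygon in the angle representation. -/
noncomputable def polygonEnergy (N : ℕ) (α ψ : ℕ → ℝ) : ℝ :=
  α 0 * Real.cos (∑ μ ∈ Finset.Ico 1 N, ψ μ) +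
    ∑ μ ∈ Finset.Ico 1 N, α μ * Real.cos (ψ μ)

/-- In the regular domain `0 < α₀ < |α_τ|` one has
`α_(c) := (Σ_{μ=1}^{N−1} |α_μ|⁻¹)⁻¹ < |α_τ|`, and the LEC of the polygon is
collinear (every global minimizer has all `ψ_μ ∈ {0, π}`) iff `α₀ ≤ α_(c)`. -/

lemma cos_half_sq (x : ℝ) : Real.cos x = 1 - 2 * Real.sin (x/2) ^ 2 := by
  have h1 := Real.cos_sq (x/2)
  have h2 := Real.sin_sq (x/2)
  have : 2 * (x/2) = x := by ring
  rw [this] at h1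
  linarith

lemma abs_sin_add_le (a b : ℝ) : |Real.sin (a+b)| ≤ |Real.sin a| + |Real.sin b| := by
  rw [Real.sin_add]
  calc |sin a * cos b + cos a * sin b| ≤ |sin a * cos b| + |cos a * sin b| := abs_add_le _ _
    _ = |sin a| * |cos b| + |cos a| * |sin b| := by rw [abs_mul, abs_mul]
    _ ≤ |sin a| * 1 + 1 * |sin b| := by
        gcongr <;> [exact Real.abs_cos_le_one b; exact Real.abs_cos_le_one a]
    _ = |sin a| + |sin b| := by ring

lemma abs_sin_sum_le (F : Finset ℕ) (x : ℕ → ℝ) :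
    |Real.sin (∑ μ ∈ F, x μ)| ≤ ∑ μ ∈ F, |Real.sin (x μ)| := by
  induction F using Finset.cons_induction with
  | empty => simp
  | cons a s ha ih =>
    rw [Finset.sum_cons, Finset.sum_cons]
    exact (abs_sin_add_le _ _).trans (by linarith)

lemma abs_sin_add_lt {a b : ℝ} (ha : Real.sin a ≠ 0) (hb : Real.sin b ≠ 0) :
    |Real.sin (a+b)| < |Real.sin a| + |Real.sin b| := by
  have hca : |Real.cos b| < 1 := by
    rcases lt_or_eq_of_le (Real.abs_cos_le_one b) with h | h
    · exact h
    · exfalso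
      have := Real.sin_sq_add_cos_sq b
      have h2 : Real.cos b ^ 2 = 1 := by
        rw [← sq_abs, h]; norm_num
      have : Real.sin b ^ 2 = 0 := by linarith
      exact hb (by nlinarith [sq_nonneg (Real.sin b)])
  have hsa : 0 < |Real.sin a| := abs_pos.2 ha
  rw [Real.sin_add]
  calc |sin a * cos b + cos a * sin b| ≤ |sin a * cos b| + |cos a * sin b| := abs_add_le _ _
    _ = |sin a| * |cos b| + |cos a| * |sin b| := by rw [abs_mul, abs_mul]
    _ < |sin a| * 1 + 1 * |sin b| := by
        have h1 : |sin a| * |cos b| < |sin a| * 1 := by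
          exact mul_lt_mul_of_pos_left hca hsa
        have h2 : |cos a| * |sin b| ≤ 1 * |sin b| :=
          mul_le_mul_of_nonneg_right (Real.abs_cos_le_one a) (abs_nonneg _)
        linarith
    _ = |sin a| + |sin b| := by ring

lemma abs_sin_sum_lt (F : Finset ℕ) (x : ℕ → ℝ) {ν ν' : ℕ} (hν : ν ∈ F) (hν' : ν' ∈ F)
    (hne : ν ≠ ν') (h1 : Real.sin (x ν) ≠ 0) (h2 : Real.sin (x ν') ≠ 0) :
    |Real.sin (∑ μ ∈ F, x μ)| < ∑ μ ∈ F, |Real.sin (x μ)| := by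
  have hν'e : ν' ∈ F.erase ν := Finset.mem_erase.2 ⟨hne.symm, hν'⟩
  have e1 : ∑ μ ∈ F, x μ = x ν + (x ν' + ∑ μ ∈ (F.erase ν).erase ν', x μ) := by
    rw [Finset.add_sum_erase _ _ hν'e, Finset.add_sum_erase _ _ hν]
  have e2 : ∑ μ ∈ F, |Real.sin (x μ)| =
      |Real.sin (x ν)| + (|Real.sin (x ν')| + ∑ μ ∈ (F.erase ν).erase ν', |Real.sin (x μ)|) := by
    rw [Finset.add_sum_erase _ (fun μ => |Real.sin (x μ)|) hν'e,
      Finset.add_sum_erase _ (fun μ => |Real.sin (x μ)|) hν]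
  rw [e1, e2]
  have key : |Real.sin (x ν + x ν')| < |Real.sin (x ν)| + |Real.sin (x ν')| :=
    abs_sin_add_lt h1 h2
  calc |Real.sin (x ν + (x ν' + ∑ μ ∈ (F.erase ν).erase ν', x μ))|
      = |Real.sin ((x ν + x ν') + ∑ μ ∈ (F.erase ν).erase ν', x μ)| := by ring_nf
    _ ≤ |Real.sin (x ν + x ν')| + ∑ μ ∈ (F.erase ν).erase ν', |Real.sin (x μ)| := by
        have := abs_sin_add_le (x ν + x ν') (∑ μ ∈ (F.erase ν).erase ν', x μ)
        exact this.trans (by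
          have := abs_sin_sum_le ((F.erase ν).erase ν') x
          linarith)
    _ < _ := by linarith

lemma key_energy_gt (N : ℕ) (α : ℕ → ℝ) (hα0 : 0 < α 0)
    (hαμ : ∀ μ ∈ Finset.Ico 1 N, α μ < 0)
    (τ : ℕ) (hτ : τ ∈ Finset.Ico 1 N)
    (hτmin : ∀ μ ∈ Finset.Ico 1 N, |α τ| ≤ |α μ|)
    (hreg : α 0 < |α τ|)
    (hS : α 0 * ∑ μ ∈ Finset.Ico 1 N, |α μ|⁻¹ ≤ 1)
    (ψ : ℕ → ℝ) (hψ : ∀ μ ∈ Finset.Ico 1 N, ψ μ ∈ Set.Ioc (-π) π)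
    (ν : ℕ) (hν : ν ∈ Finset.Ico 1 N) (hνne : ψ ν ≠ 0) :
    α 0 + ∑ μ ∈ Finset.Ico 1 N, α μ < polygonEnergy N α ψ := by
  set F := Finset.Ico 1 N with hF
  set s : ℕ → ℝ := fun μ => Real.sin (ψ μ / 2) with hs
  set t : ℝ := Real.sin ((∑ μ ∈ F, ψ μ) / 2) with ht
  set Q : ℝ := ∑ μ ∈ F, (-(α μ)) * (s μ) ^ 2 with hQ
  -- energy identity
  have hE : polygonEnergy N α ψ =
      α 0 + ∑ μ ∈ F, α μ - 2 * α 0 * t ^ 2 + 2 * Q := by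
    unfold polygonEnergy
    rw [cos_half_sq (∑ μ ∈ F, ψ μ)]
    have : ∑ μ ∈ F, α μ * Real.cos (ψ μ) = ∑ μ ∈ F, (α μ - 2 * (α μ * (s μ)^2)) := by
      refine Finset.sum_congr rfl fun μ _ => ?_
      rw [cos_half_sq (ψ μ)]; ring
    rw [this, Finset.sum_sub_distrib, ← Finset.mul_sum, hQ]
    rw [← ht]
    have : ∑ μ ∈ F, α μ * s μ ^ 2 = - ∑ μ ∈ F, (-(α μ)) * s μ ^ 2 := by
      rw [← Finset.sum_neg_distrib]; exact Finset.sum_congr rfl fun μ _ => by ring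
    rw [this]; ring
  -- basic facts
  have hQnonneg : 0 ≤ Q := Finset.sum_nonneg fun μ hμ =>
    mul_nonneg (by linarith [hαμ μ hμ]) (sq_nonneg _)
  have hsν : s ν ≠ 0 := by
    have h := hψ ν hν
    have hpi := Real.pi_pos
    refine fun h0 => hνne ?_
    have : ψ ν / 2 = 0 := by
      rw [← Real.sin_eq_zero_iff_of_lt_of_lt (by linarith [h.1]) (by linarith [h.2])]
      exact h0
    linarith
  suffices hlt : α 0 * t ^ 2 < Q by linarith [hE]
  have htabs : (∑ μ ∈ F, ψ μ) / 2 = ∑ μ ∈ F, (ψ μ / 2) := by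
    rw [Finset.sum_div]
  by_cases hone : ∀ μ ∈ F.erase ν, s μ = 0
  · -- single nonzero angle
    have hQeq : Q = (-(α ν)) * (s ν) ^ 2 := by
      rw [hQ, ← Finset.add_sum_erase _ _ hν, Finset.sum_eq_zero (fun μ hμ => by
        rw [hone μ hμ]; ring), add_zero]
    have htle : |t| ≤ |s ν| := by
      have h1 : |t| ≤ ∑ μ ∈ F, |s μ| := by
        rw [ht, htabs]; exact abs_sin_sum_le F (fun μ => ψ μ / 2)
      have h2 : ∑ μ ∈ F, |s μ| = |s ν| := by
        rw [← Finset.add_sum_erase _ _ hν, Finset.sum_eq_zero (fun μ hμ => by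
          rw [hone μ hμ]; simp), add_zero]
      linarith
    have ht2 : t ^ 2 ≤ (s ν) ^ 2 := by
      rw [← sq_abs t, ← sq_abs (s ν)]
      exact pow_le_pow_left₀ (abs_nonneg _) htle 2
    have haν : α 0 < -(α ν) := by
      have := hτmin ν hν
      have := abs_of_neg (hαμ ν hν)
      linarith
    have hsν2 : 0 < (s ν) ^ 2 := by positivity
    calc α 0 * t ^ 2 ≤ α 0 * (s ν) ^ 2 := by nlinarith
      _ < (-(α ν)) * (s ν) ^ 2 := by nlinarith
      _ = Q := hQeq.symm
  · -- two nonzero angles: Cauchy-Schwarz route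
    push_neg at hone
    obtain ⟨ν', hν', hsν'⟩ := hone
    have hν'F : ν' ∈ F := Finset.mem_of_mem_erase hν'
    have hneq : ν ≠ ν' := fun h => (Finset.mem_erase.1 hν').1 h.symm
    have hstrict : |t| < ∑ μ ∈ F, |s μ| := by
      rw [ht, htabs]
      exact abs_sin_sum_lt F (fun μ => ψ μ / 2) hν hν'F hneq hsν hsν'
    have hsum_pos : 0 < ∑ μ ∈ F, |s μ| := lt_of_le_of_lt (abs_nonneg t) hstrict
    have ht2 : t ^ 2 < (∑ μ ∈ F, |s μ|) ^ 2 := by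
      rw [← sq_abs t]
      exact pow_lt_pow_left₀ hstrict (abs_nonneg _) (by norm_num)
    -- Cauchy-Schwarz
    have hCS : (∑ μ ∈ F, |s μ|) ^ 2 ≤ (∑ μ ∈ F, |α μ|⁻¹) * Q := by
      have h := Finset.sum_mul_sq_le_sq_mul_sq F
        (fun μ => Real.sqrt (|α μ|⁻¹)) (fun μ => Real.sqrt (-(α μ)) * |s μ|)
      have e1 : ∑ μ ∈ F, Real.sqrt (|α μ|⁻¹) * (Real.sqrt (-(α μ)) * |s μ|)
          = ∑ μ ∈ F, |s μ| := by
        refine Finset.sum_congr rfl fun μ hμ => ?_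
        have hneg := hαμ μ hμ
        have habs : |α μ| = -(α μ) := abs_of_neg hneg
        have hpos : (0:ℝ) < -(α μ) := by linarith
        have hsq : Real.sqrt (-(α μ)) ≠ 0 := (Real.sqrt_pos.2 hpos).ne'
        rw [habs, Real.sqrt_inv, ← mul_assoc, inv_mul_cancel₀ hsq, one_mul]
      have e2 : ∑ μ ∈ F, Real.sqrt (|α μ|⁻¹) ^ 2 = ∑ μ ∈ F, |α μ|⁻¹ :=
        Finset.sum_congr rfl fun μ hμ => Real.sq_sqrt (by positivity)
      have e3 : ∑ μ ∈ F, (Real.sqrt (-(α μ)) * |s μ|) ^ 2 = Q := by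
        refine Finset.sum_congr rfl fun μ hμ => ?_
        have hpos : (0:ℝ) < -(α μ) := by linarith [hαμ μ hμ]
        rw [mul_pow, Real.sq_sqrt hpos.le, sq_abs]
      rw [e1, e2, e3] at h
      exact h
    have h1 : t ^ 2 < (∑ μ ∈ F, |α μ|⁻¹) * Q := lt_of_lt_of_le ht2 hCS
    calc α 0 * t ^ 2 < α 0 * ((∑ μ ∈ F, |α μ|⁻¹) * Q) := by
          apply mul_lt_mul_of_pos_left h1 hα0
      _ = (α 0 * (∑ μ ∈ F, |α μ|⁻¹)) * Q := by ring
      _ ≤ 1 * Q := mul_le_mul_of_nonneg_right hS hQnonneg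
      _ = Q := one_mul Q

set_option maxHeartbeats 1000000 in
lemma pert_exists (N : ℕ) (hN : 2 < N) (α : ℕ → ℝ) (hα0 : 0 < α 0)
    (hαμ : ∀ μ ∈ Finset.Ico 1 N, α μ < 0)
    (h1 : 1 < α 0 * ∑ μ ∈ Finset.Ico 1 N, |α μ|⁻¹) :
    ∃ ψ : ℕ → ℝ, (∀ μ ∈ Finset.Ico 1 N, ψ μ ∈ Set.Ioc (-π) π) ∧
      polygonEnergy N α ψ < α 0 + ∑ μ ∈ Finset.Ico 1 N, α μ := by
  set F := Finset.Ico 1 N with hF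
  have hFne : F.Nonempty := ⟨1, by rw [hF]; simp; omega⟩
  set S : ℝ := ∑ μ ∈ F, |α μ|⁻¹ with hSdef
  set T : ℝ := ∑ μ ∈ F, (|α μ|⁻¹) ^ 3 with hTdef
  have habs : ∀ μ ∈ F, (0:ℝ) < |α μ| := fun μ hμ => abs_pos.2 (hαμ μ hμ).ne
  have hSpos : 0 < S := Finset.sum_pos (fun μ hμ => by
    have := habs μ hμ; positivity) hFne
  have hTpos : 0 < T := Finset.sum_pos (fun μ hμ => by
    have := habs μ hμ; positivity) hFne
  set A : ℝ := S * (α 0 * S - 1) / 2 with hAdef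
  set B : ℝ := (5/96) * (α 0 * S^4 + T) with hBdef
  have hApos : 0 < A := by
    have : 0 < α 0 * S - 1 := by linarith
    positivity
  have hBpos : 0 < B := by positivity
  set t : ℝ := min S⁻¹ (Real.sqrt (A / (2*B))) with htdef
  have htpos : 0 < t := lt_min (by positivity) (Real.sqrt_pos.2 (by positivity))
  have htS : t * S ≤ 1 := by
    have h := min_le_left S⁻¹ (Real.sqrt (A / (2*B)))
    calc t * S ≤ S⁻¹ * S := mul_le_mul_of_nonneg_right h hSpos.le
      _ = 1 := inv_mul_cancel₀ hSpos.ne'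
  have ht2 : t^2 * B < A := by
    have h := min_le_right S⁻¹ (Real.sqrt (A / (2*B)))
    have h2 : t^2 ≤ A / (2*B) := by
      have := Real.sq_sqrt (show (0:ℝ) ≤ A / (2*B) by positivity)
      nlinarith [Real.sqrt_nonneg (A / (2*B))]
    have hx : A / (2*B) * B = A / 2 := by field_simp
    have : t^2 * B ≤ A / 2 := by
      calc t^2 * B ≤ (A / (2*B)) * B := mul_le_mul_of_nonneg_right h2 hBpos.le
        _ = A / 2 := hx
    linarith
  refine ⟨fun μ => t * |α μ|⁻¹, ?_, ?_⟩
  · intro μ hμ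
    have ha := habs μ hμ
    have hle : |α μ|⁻¹ ≤ S := Finset.single_le_sum
      (f := fun μ => |α μ|⁻¹) (fun i hi => by have := habs i hi; positivity) hμ
    have hψpos : 0 < t * |α μ|⁻¹ := mul_pos htpos (by positivity)
    constructor
    · linarith [Real.pi_pos]
    · calc t * |α μ|⁻¹ ≤ t * S := by
            apply mul_le_mul_of_nonneg_left hle htpos.le
        _ ≤ 1 := htS
        _ ≤ π := by linarith [Real.pi_gt_three]
  · -- energy bound
    have hsum : ∑ μ ∈ F, t * |α μ|⁻¹ = t * S := by rw [hSdef, Finset.mul_sum]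
    have hcos0 : α 0 * Real.cos (t * S) ≤
        α 0 * (1 - (t*S)^2/2 + (t*S)^4 * (5/96)) := by
      have htS0 : (0:ℝ) ≤ t * S := mul_nonneg htpos.le hSpos.le
      have hb := Real.cos_bound (x := t*S) (by
        rw [abs_of_nonneg htS0]; exact htS)
      rw [abs_of_nonneg htS0] at hb
      have := abs_le.1 hb
      apply mul_le_mul_of_nonneg_left _ hα0.le
      linarith [this.2]
    have hterm : ∀ μ ∈ F, α μ * Real.cos (t * |α μ|⁻¹) ≤
        α μ + (t^2/2) * |α μ|⁻¹ + (5/96) * t^4 * (|α μ|⁻¹)^3 := by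
      intro μ hμ
      have ha := habs μ hμ
      have hle : |α μ|⁻¹ ≤ S := Finset.single_le_sum
        (f := fun μ => |α μ|⁻¹) (fun i hi => by have := habs i hi; positivity) hμ
      have hx1 : t * |α μ|⁻¹ ≤ 1 := by
        calc t * |α μ|⁻¹ ≤ t * S := mul_le_mul_of_nonneg_left hle htpos.le
          _ ≤ 1 := htS
      have hx0 : (0:ℝ) ≤ t * |α μ|⁻¹ := (mul_pos htpos (by positivity)).le
      have hb := Real.cos_bound (x := t * |α μ|⁻¹) (by
        rw [abs_of_nonneg hx0]; exact hx1)
      rw [abs_of_nonneg hx0] at hb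
      have hb2 := abs_le.1 hb
      have hcge : 1 - (t * |α μ|⁻¹)^2/2 - (t * |α μ|⁻¹)^4 * (5/96) ≤
          Real.cos (t * |α μ|⁻¹) := by linarith [hb2.1]
      have hmul := mul_le_mul_of_nonpos_left hcge (le_of_lt (hαμ μ hμ))
      refine le_trans hmul (le_of_eq ?_)
      have habsid : |α μ| = -(α μ) := abs_of_neg (hαμ μ hμ)
      have hinv : α μ * |α μ|⁻¹ = -1 := by
        rw [habsid]
        field_simp
        rw [div_self (hαμ μ hμ).ne]
      have hinv2 : α μ * (|α μ|⁻¹)^2 = -(|α μ|⁻¹) := by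
        rw [pow_two, ← mul_assoc, hinv]; ring
      have hinv4 : α μ * (|α μ|⁻¹)^4 = -((|α μ|⁻¹)^3) := by
        rw [show (|α μ|⁻¹)^4 = |α μ|⁻¹ * (|α μ|⁻¹)^3 by ring, ← mul_assoc, hinv]; ring
      calc α μ * (1 - (t * |α μ|⁻¹)^2/2 - (t * |α μ|⁻¹)^4 * (5/96))
          = α μ - (t^2/2) * (α μ * (|α μ|⁻¹)^2) - (5/96) * t^4 * (α μ * (|α μ|⁻¹)^4) := by
            ring
        _ = α μ + (t^2/2) * |α μ|⁻¹ + (5/96) * t^4 * (|α μ|⁻¹)^3 := by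
            rw [hinv2, hinv4]; ring
    have hsum2 : ∑ μ ∈ F, α μ * Real.cos (t * |α μ|⁻¹) ≤
        ∑ μ ∈ F, α μ + (t^2/2) * S + (5/96) * t^4 * T := by
      calc ∑ μ ∈ F, α μ * Real.cos (t * |α μ|⁻¹)
          ≤ ∑ μ ∈ F, (α μ + (t^2/2) * |α μ|⁻¹ + (5/96) * t^4 * (|α μ|⁻¹)^3) :=
            Finset.sum_le_sum hterm
        _ = ∑ μ ∈ F, α μ + (t^2/2) * S + (5/96) * t^4 * T := by
            rw [Finset.sum_add_distrib, Finset.sum_add_distrib, hSdef, hTdef,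
              Finset.mul_sum, Finset.mul_sum]
    have hEexp : polygonEnergy N α (fun μ => t * |α μ|⁻¹) =
        α 0 * Real.cos (t * S) + ∑ μ ∈ F, α μ * Real.cos (t * |α μ|⁻¹) := by
      unfold polygonEnergy
      rw [← hF, hsum]
    rw [hEexp]
    have hfinal : α 0 * (1 - (t*S)^2/2 + (t*S)^4 * (5/96)) +
        (∑ μ ∈ F, α μ + (t^2/2) * S + (5/96) * t^4 * T)
        = α 0 + ∑ μ ∈ F, α μ - t^2 * A + t^4 * B := by
      rw [hAdef, hBdef]; ring
    have hlt : α 0 + ∑ μ ∈ F, α μ - t^2 * A + t^4 * B < α 0 + ∑ μ ∈ F, α μ := by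
      have : t^4 * B < t^2 * A := by
        calc t^4 * B = t^2 * (t^2 * B) := by ring
          _ < t^2 * A := mul_lt_mul_of_pos_left ht2 (by positivity)
      linarith
    linarith [hcos0, hsum2]

lemma collinear_ge (N : ℕ) (α : ℕ → ℝ) (hα0 : 0 < α 0)
    (hαμ : ∀ μ ∈ Finset.Ico 1 N, α μ < 0)
    (τ : ℕ) (hτ : τ ∈ Finset.Ico 1 N)
    (hτmin : ∀ μ ∈ Finset.Ico 1 N, |α τ| ≤ |α μ|)
    (hreg : α 0 < |α τ|)
    (ψ : ℕ → ℝ) (hcol : ∀ μ ∈ Finset.Ico 1 N, ψ μ = 0 ∨ ψ μ = π) :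
    α 0 + ∑ μ ∈ Finset.Ico 1 N, α μ ≤ polygonEnergy N α ψ := by
  set F := Finset.Ico 1 N with hF
  by_cases hall : ∀ μ ∈ F, ψ μ = 0
  · have h1 : ∑ μ ∈ F, ψ μ = 0 := Finset.sum_eq_zero hall
    have h2 : ∑ μ ∈ F, α μ * Real.cos (ψ μ) = ∑ μ ∈ F, α μ :=
      Finset.sum_congr rfl fun μ hμ => by rw [hall μ hμ, Real.cos_zero, mul_one]
    unfold polygonEnergy
    rw [← hF, h1, Real.cos_zero, mul_one, h2]
  · push_neg at hall
    obtain ⟨ν, hν, hνne⟩ := hall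
    have hνπ : ψ ν = π := (hcol ν hν).resolve_left hνne
    have hcos1 : α 0 * Real.cos (∑ μ ∈ F, ψ μ) ≥ -(α 0) := by
      have := Real.neg_one_le_cos (∑ μ ∈ F, ψ μ)
      nlinarith
    have hterm : ∀ μ ∈ F.erase ν, α μ ≤ α μ * Real.cos (ψ μ) := by
      intro μ hμ
      have h1 := Real.cos_le_one (ψ μ)
      have h2 := hαμ μ (Finset.mem_of_mem_erase hμ)
      nlinarith
    have hsum : ∑ μ ∈ F, α μ * Real.cos (ψ μ)
        ≥ -(α ν) + (∑ μ ∈ F, α μ - α ν) := by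
      rw [← Finset.add_sum_erase _ (fun μ => α μ * Real.cos (ψ μ)) hν]
      have e1 : α ν * Real.cos (ψ ν) = -(α ν) := by
        rw [hνπ, Real.cos_pi]; ring
      have e2 : ∑ μ ∈ F.erase ν, α μ ≤ ∑ μ ∈ F.erase ν, α μ * Real.cos (ψ μ) :=
        Finset.sum_le_sum hterm
      have e3 : ∑ μ ∈ F.erase ν, α μ = ∑ μ ∈ F, α μ - α ν := by
        rw [← Finset.add_sum_erase _ (fun μ => α μ) hν]; ring
      rw [e1]
      linarith
    have hτν : |α τ| ≤ -(α ν) := by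
      have := hτmin ν hν
      have := abs_of_neg (hαμ ν hν)
      linarith
    unfold polygonEnergy
    rw [← hF]
    have : -(α 0) + (-(α ν) + (∑ μ ∈ F, α μ - α ν)) ≥ α 0 + ∑ μ ∈ F, α μ := by
      linarith
    linarith

lemma min_exists (N : ℕ) (α : ℕ → ℝ) :
    ∃ ψ : ℕ → ℝ, (∀ μ ∈ Finset.Ico 1 N, ψ μ ∈ Set.Ioc (-π) π) ∧
      ∀ φ : ℕ → ℝ, (∀ μ ∈ Finset.Ico 1 N, φ μ ∈ Set.Ioc (-π) π) →
        polygonEnergy N α ψ ≤ polygonEnergy N α φ := by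
  set F := Finset.Ico 1 N with hF
  set K : Set (ℕ → ℝ) :=
    Set.pi Set.univ (fun μ => if μ ∈ F then Set.Icc (-π) π else {0}) with hK
  have hKc : IsCompact K := isCompact_univ_pi fun μ => by
    by_cases h : μ ∈ F
    · rw [if_pos h]; exact isCompact_Icc
    · rw [if_neg h]; exact isCompact_singleton
  have hKne : K.Nonempty := by
    refine ⟨fun _ => 0, fun μ _ => ?_⟩
    dsimp only
    by_cases h : μ ∈ F
    · rw [if_pos h]
      exact ⟨by linarith [Real.pi_pos], Real.pi_pos.le⟩
    · rw [if_neg h]; rfl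
  have hcont : Continuous (polygonEnergy N α) := by
    unfold polygonEnergy
    apply Continuous.add
    · exact continuous_const.mul (Real.continuous_cos.comp
        (continuous_finset_sum _ fun μ _ => continuous_apply μ))
    · exact continuous_finset_sum _ fun μ _ =>
        continuous_const.mul (Real.continuous_cos.comp (continuous_apply μ))
  obtain ⟨ψ₀, hψ₀K, hmin⟩ := hKc.exists_isMinOn hKne hcont.continuousOn
  set ψ : ℕ → ℝ := fun μ => if ψ₀ μ = -π then π else ψ₀ μ with hψdef
  have hψ₀mem : ∀ μ ∈ F, ψ₀ μ ∈ Set.Icc (-π) π := by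
    intro μ hμ
    have h2 := hψ₀K μ (Set.mem_univ μ)
    dsimp only at h2
    rwa [if_pos hμ] at h2
  -- energies agree
  have hcosr : ∀ μ, Real.cos (ψ μ) = Real.cos (ψ₀ μ) := by
    intro μ
    by_cases h : ψ₀ μ = -π
    · simp only [hψdef, if_pos h, h]
      rw [← Real.cos_neg π]
    · simp only [hψdef, if_neg h]
  have hsum : ∑ μ ∈ F, ψ μ =
      ∑ μ ∈ F, ψ₀ μ + (#(F.filter fun μ => ψ₀ μ = -π)) * (2 * π) := by
    have e1 : ∀ μ, ψ μ = ψ₀ μ + (if ψ₀ μ = -π then 2 * π else 0) := by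
      intro μ
      show (if ψ₀ μ = -π then π else ψ₀ μ) = ψ₀ μ + (if ψ₀ μ = -π then 2 * π else 0)
      by_cases h : ψ₀ μ = -π
      · rw [if_pos h, if_pos h, h]; ring
      · rw [if_neg h, if_neg h]; ring
    calc ∑ μ ∈ F, ψ μ = ∑ μ ∈ F, (ψ₀ μ + if ψ₀ μ = -π then 2 * π else 0) :=
          Finset.sum_congr rfl fun μ _ => e1 μ
      _ = ∑ μ ∈ F, ψ₀ μ + ∑ μ ∈ F, (if ψ₀ μ = -π then 2 * π else 0) :=
          Finset.sum_add_distrib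
      _ = _ := by
          rw [← Finset.sum_filter, Finset.sum_const, nsmul_eq_mul]
  have hEeq : polygonEnergy N α ψ = polygonEnergy N α ψ₀ := by
    unfold polygonEnergy
    rw [← hF, hsum, Real.cos_add_nat_mul_two_pi]
    congr 1
    exact Finset.sum_congr rfl fun μ _ => by rw [hcosr μ]
  refine ⟨ψ, ?_, ?_⟩
  · intro μ hμ
    obtain ⟨hl, hr⟩ := hψ₀mem μ hμ
    by_cases h : ψ₀ μ = -π
    · simp only [hψdef, if_pos h]
      exact ⟨by linarith [Real.pi_pos], le_refl π⟩
    · simp only [hψdef, if_neg h]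
      exact ⟨lt_of_le_of_ne hl (Ne.symm h), hr⟩
  · intro φ hφ
    set φ' : ℕ → ℝ := fun μ => if μ ∈ F then φ μ else 0 with hφ'def
    have hφ'K : φ' ∈ K := by
      intro μ _
      dsimp only
      by_cases h : μ ∈ F
      · rw [if_pos h]
        simp only [hφ'def, if_pos h]
        exact ⟨(hφ μ h).1.le, (hφ μ h).2⟩
      · rw [if_neg h]
        simp only [hφ'def, if_neg h]
        rfl
    have hEφ : polygonEnergy N α φ' = polygonEnergy N α φ := by
      unfold polygonEnergy
      rw [← hF]
      congr 1
      · congr 1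
        exact congrArg Real.cos (Finset.sum_congr rfl fun μ hμ => by
          simp only [hφ'def, if_pos hμ])
      · exact Finset.sum_congr rfl fun μ hμ => by simp only [hφ'def, if_pos hμ]
    rw [hEeq, ← hEφ]
    exact hmin hφ'K

theorem collinear_lec_iff_le_critical (N : ℕ) (hN : 2 < N) (α : ℕ → ℝ)
    (hα0 : 0 < α 0) (hαμ : ∀ μ ∈ Finset.Ico 1 N, α μ < 0)
    (τ : ℕ) (hτ : τ ∈ Finset.Ico 1 N)
    (hτmin : ∀ μ ∈ Finset.Ico 1 N, |α τ| ≤ |α μ|)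
    (hreg : α 0 < |α τ|) :
    (∑ μ ∈ Finset.Ico 1 N, |α μ|⁻¹)⁻¹ < |α τ| ∧
    ((∀ ψ : ℕ → ℝ, (∀ μ ∈ Finset.Ico 1 N, ψ μ ∈ Set.Ioc (-π) π) →
        (∀ φ : ℕ → ℝ, (∀ μ ∈ Finset.Ico 1 N, φ μ ∈ Set.Ioc (-π) π) →
          polygonEnergy N α ψ ≤ polygonEnergy N α φ) →
        ∀ μ ∈ Finset.Ico 1 N, ψ μ = 0 ∨ ψ μ = π) ↔
      α 0 ≤ (∑ μ ∈ Finset.Ico 1 N, |α μ|⁻¹)⁻¹) := by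
  set F := Finset.Ico 1 N with hF
  have hFne : F.Nonempty := ⟨1, by rw [hF]; simp; omega⟩
  set S : ℝ := ∑ μ ∈ F, |α μ|⁻¹ with hSdef
  have habs : ∀ μ ∈ F, (0:ℝ) < |α μ| := fun μ hμ => abs_pos.2 (hαμ μ hμ).ne
  have hSpos : 0 < S := Finset.sum_pos (fun μ hμ => by
    have := habs μ hμ; positivity) hFne
  have hτabs : 0 < |α τ| := habs τ hτ
  have part1 : S⁻¹ < |α τ| := by
    have hcard : 2 ≤ F.card := by rw [hF, Nat.card_Ico]; omega
    have herane : (F.erase τ).Nonempty := by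
      rw [← Finset.card_pos, Finset.card_erase_of_mem hτ]; omega
    obtain ⟨ν, hν⟩ := herane
    have hνF := Finset.mem_of_mem_erase hν
    have hsingle : |α ν|⁻¹ ≤ ∑ μ ∈ F.erase τ, |α μ|⁻¹ :=
      Finset.single_le_sum (f := fun μ => |α μ|⁻¹)
        (fun i hi => by have := habs i (Finset.mem_of_mem_erase hi); positivity) hν
    have hlt : |α τ|⁻¹ < S := by
      rw [hSdef, ← Finset.add_sum_erase _ (fun μ => |α μ|⁻¹) hτ]
      have hνpos : 0 < |α ν|⁻¹ := by have := habs ν hνF; positivity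
      linarith
    have h2 := inv_strictAnti₀ (by positivity : (0:ℝ) < |α τ|⁻¹) hlt
    rwa [inv_inv] at h2
  refine ⟨part1, ?_, ?_⟩
  · -- collinear minimizers → α 0 ≤ S⁻¹
    intro hcol
    by_contra hgt
    push_neg at hgt
    have h1 : 1 < α 0 * S := by
      have := mul_lt_mul_of_pos_right hgt hSpos
      rwa [inv_mul_cancel₀ hSpos.ne'] at this
    obtain ⟨ψt, hψt, hEt⟩ := pert_exists N hN α hα0 hαμ h1
    obtain ⟨ψs, hfeas, hmin⟩ := min_exists N α
    have hcoll := hcol ψs hfeas hmin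
    have hge := collinear_ge N α hα0 hαμ τ hτ hτmin hreg ψs hcoll
    have hle2 := hmin ψt hψt
    linarith
  · -- α 0 ≤ S⁻¹ → collinear minimizers
    intro hle ψ hψ hmin μ hμ
    left
    by_contra hne
    have hS1 : α 0 * S ≤ 1 := by
      have := mul_le_mul_of_nonneg_right hle hSpos.le
      rwa [inv_mul_cancel₀ hSpos.ne'] at this
    have hkey := key_energy_gt N α hα0 hαμ τ hτ hτmin hreg hS1 ψ hψ μ hμ hne
    have hzero : (∀ ν ∈ Finset.Ico 1 N, (fun _ => (0:ℝ)) ν ∈ Set.Ioc (-π) π) := by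
      intro ν _
      have hpi := Real.pi_pos
      constructor
      · show -π < 0; linarith
      · show (0:ℝ) ≤ π; linarith
    have hE0 : polygonEnergy N α (fun _ => 0) = α 0 + ∑ ν ∈ F, α ν := by
      unfold polygonEnergy
      rw [← hF, Finset.sum_const, smul_zero, Real.cos_zero, mul_one]
      congr 1
      exact Finset.sum_congr rfl fun ν _ => by rw [Real.cos_zero, mul_one]
    have hmin0 := hmin (fun _ => 0) hzero
    rw [hE0] at hmin0
    linarith
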